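/- Let ψ_1, …, ψ_n be unit vectors in ℂ^d and let p_1, …, p_n be strictly positive reals summing to 1. Let G be the n×n Gram matrix with entries G_{ij} = √(p_i p_j)·⟨ψ_i, ψ_j⟩. Then ∑_{i=1}^{n} ((√G)_{ii})² ≥ ∑_{i=1}^{n} p_i² / (∑_{j=1}^{n} p_j·|⟨ψ_i, ψ_j⟩|²). -/

import Mathlib

open Matrix
open scoped ComplexOrder

/-- The Mathlib (Dec 2024) definition of `Matrix.PosSemidef.sqrt`, removed since. -/
noncomputable def Matrix.PosSemidef.sqrt {n : Type*} [Fintype n] [DecidableEq n] {𝕜 : Type*} [RCLike 𝕜]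
    {A : Matrix n n 𝕜} (hA : A.PosSemidef) : Matrix n n 𝕜 :=
  (hA.1.eigenvectorUnitary : Matrix n n 𝕜) * diagonal (fun i => ((√(hA.1.eigenvalues i) : ℝ) : 𝕜)) *
    (star hA.1.eigenvectorUnitary : Matrix n n 𝕜)

lemma Matrix.PosSemidef.posSemidef_sqrt {n : Type*} [Fintype n] [DecidableEq n] {𝕜 : Type*}
    [RCLike 𝕜] {A : Matrix n n 𝕜} (hA : A.PosSemidef) : hA.sqrt.PosSemidef := by
  unfold Matrix.PosSemidef.sqrt
  have hs : (star hA.1.eigenvectorUnitary : Matrix n n 𝕜) =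
      (hA.1.eigenvectorUnitary : Matrix n n 𝕜)ᴴ := rfl
  rw [hs]
  apply PosSemidef.mul_mul_conjTranspose_same
  refine posSemidef_diagonal_iff.mpr fun i => ?_
  rw [RCLike.nonneg_iff]
  constructor
  · simp only [RCLike.ofReal_re]
    exact Real.sqrt_nonneg _
  · simp only [RCLike.ofReal_im]

lemma Matrix.PosSemidef.sq_sqrt {n : Type*} [Fintype n] [DecidableEq n] {𝕜 : Type*}
    [RCLike 𝕜] {A : Matrix n n 𝕜} (hA : A.PosSemidef) : hA.sqrt ^ 2 = A := by
  let C : Matrix n n 𝕜 := hA.1.eigenvectorUnitary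
  let E := diagonal (fun i => ((√(hA.1.eigenvalues i) : ℝ) : 𝕜))
  suffices C * (E * (star C * C) * E) * star C = A by
    rw [Matrix.PosSemidef.sqrt, pow_two]
    simpa only [← mul_assoc] using this
  have : star C * C = 1 := by simp only [C, Unitary.coe_star_mul_self]
  rw [this, mul_one]
  have : E * E = diagonal (RCLike.ofReal ∘ hA.1.eigenvalues) := by
    rw [diagonal_mul_diagonal]
    congr 1
    funext v
    simp [← pow_two, ← RCLike.ofReal_pow, Real.sq_sqrt (hA.eigenvalues_nonneg v)]
  rw [this]
  conv_rhs => rw [hA.1.spectral_theorem, Unitary.conjStarAlgAut_apply]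

private lemma herm_cs {n : ℕ} {A B : Matrix (Fin n) (Fin n) ℂ}
    (hA : A.IsHermitian) (hB : B.IsHermitian) (i : Fin n) :
    (((A * B) i i).re) ^ 2 ≤ ((A * A) i i).re * ((B * B) i i).re := by
  set x : EuclideanSpace ℂ (Fin n) := WithLp.toLp 2 (fun k => A i k) with hx
  set y : EuclideanSpace ℂ (Fin n) := WithLp.toLp 2 (fun k => B i k) with hy
  have hxy : (A * B) i i = inner ℂ y x := by
    simp only [Matrix.mul_apply, PiLp.inner_apply, RCLike.inner_apply, hx, hy]
    refine Finset.sum_congr rfl fun k _ => ?_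
    rw [starRingEnd_apply, hB.apply k i]
  have hxx : ((A * A) i i).re = ‖x‖ ^ 2 := by
    have h : (A * A) i i = inner ℂ x x := by
      simp only [Matrix.mul_apply, PiLp.inner_apply, RCLike.inner_apply, hx]
      refine Finset.sum_congr rfl fun k _ => ?_
      rw [starRingEnd_apply, hA.apply k i]
    rw [h, inner_self_eq_norm_sq_to_K]; norm_cast
  have hyy : ((B * B) i i).re = ‖y‖ ^ 2 := by
    have h : (B * B) i i = inner ℂ y y := by
      simp only [Matrix.mul_apply, PiLp.inner_apply, RCLike.inner_apply, hy]
      refine Finset.sum_congr rfl fun k _ => ?_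
      rw [starRingEnd_apply, hB.apply k i]
    rw [h, inner_self_eq_norm_sq_to_K]; norm_cast
  have h1 : ‖(A * B) i i‖ ≤ ‖y‖ * ‖x‖ := by
    rw [hxy]; exact norm_inner_le_norm y x
  have h2 : (((A * B) i i).re) ^ 2 ≤ ‖(A * B) i i‖ ^ 2 := by
    have h3 := Complex.abs_re_le_norm ((A * B) i i)
    calc (((A * B) i i).re) ^ 2 = |((A * B) i i).re| ^ 2 := (sq_abs _).symm
      _ ≤ ‖(A * B) i i‖ ^ 2 := pow_le_pow_left₀ (abs_nonneg _) h3 2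
  calc (((A * B) i i).re) ^ 2 ≤ ‖(A * B) i i‖ ^ 2 := h2
    _ ≤ (‖y‖ * ‖x‖) ^ 2 := by
        apply pow_le_pow_left₀ (norm_nonneg _) h1
    _ = ((A * A) i i).re * ((B * B) i i).re := by rw [hxx, hyy]; ring

private lemma herm_diag_sq_nonneg {n : ℕ} {C : Matrix (Fin n) (Fin n) ℂ}
    (hC : C.IsHermitian) (i : Fin n) : 0 ≤ ((C * C) i i).re := by
  have h : (C * C) i i = ∑ k, C i k * star (C i k) := by
    simp only [Matrix.mul_apply]
    exact Finset.sum_congr rfl fun k _ => by rw [hC.apply k i]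
  rw [h, Complex.re_sum]
  apply Finset.sum_nonneg
  intro k _
  rw [← starRingEnd_apply, Complex.mul_conj]
  simp [Complex.normSq_nonneg]

theorem stmt_3 (n d : ℕ) (ψ : Fin n → EuclideanSpace ℂ (Fin d)) (hψ : ∀ i, ‖ψ i‖ = 1)
    (p : Fin n → ℝ) (hp : ∀ i, 0 < p i) (hsum : ∑ i, p i = 1)
    (G : Matrix (Fin n) (Fin n) ℂ)
    (hGdef : ∀ i j, G i j = (Real.sqrt (p i * p j) : ℂ) * (inner ℂ (ψ i) (ψ j) : ℂ))
    (hG : G.PosSemidef) :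
    ∑ i, (p i) ^ 2 / (∑ j, p j * ‖(inner ℂ (ψ i) (ψ j) : ℂ)‖ ^ 2) ≤
      ∑ i, ((hG.sqrt i i).re) ^ 2 := by
  set S := hG.sqrt with hSdef
  have hSpsd : S.PosSemidef := hG.posSemidef_sqrt
  set T := hSpsd.sqrt with hTdef
  have hTpsd : T.PosSemidef := hSpsd.posSemidef_sqrt
  have hTH : T.IsHermitian := hTpsd.1
  have hT2 : T ^ 2 = S := hSpsd.sq_sqrt
  have hT4 : T ^ 4 = G := by
    rw [show (4:ℕ) = 2*2 from rfl, pow_mul, hT2, hG.sq_sqrt]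
  apply Finset.sum_le_sum
  intro i _
  set m1 := (S i i).re with hm1
  set m2 := ((G : Matrix (Fin n) (Fin n) ℂ) i i).re with hm2
  set m3 := ((T ^ 6) i i).re with hm3
  set m4 := ((G * G) i i).re with hm4
  have e1 : m2 ^ 2 ≤ m1 * m3 := by
    have h := herm_cs hTH (hTH.pow 3) i
    have h13 : T * T ^ 3 = G := by rw [← hT4, ← pow_succ']
    have hTT : T * T = S := by rw [← hT2, ← pow_two]
    have h33 : T ^ 3 * T ^ 3 = T ^ 6 := (pow_add T 3 3).symm
    rw [h13, hTT, h33] at h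
    exact h
  have e2 : m3 ^ 2 ≤ m2 * m4 := by
    have h := herm_cs (hTH.pow 2) (hTH.pow 4) i
    have h6 : T ^ 2 * T ^ 4 = T ^ 6 := (pow_add T 2 4).symm
    have h4 : T ^ 2 * T ^ 2 = T ^ 4 := (pow_add T 2 2).symm
    have h8 : T ^ 4 * T ^ 4 = G * G := by rw [hT4]
    rw [h6, h4, h8, hT4] at h
    exact h
  have hm1n : 0 ≤ m1 := by
    have h := herm_diag_sq_nonneg hTH i
    have hTT : T * T = S := by rw [← hT2, ← pow_two]
    rwa [hTT] at h
  have hm3n : 0 ≤ m3 := by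
    have h := herm_diag_sq_nonneg (hTH.pow 3) i
    have h33 : T ^ 3 * T ^ 3 = T ^ 6 := (pow_add T 3 3).symm
    rwa [h33] at h
  have hm4n : 0 ≤ m4 := herm_diag_sq_nonneg hG.1 i
  have hinner_self : (inner ℂ (ψ i) (ψ i) : ℂ) = 1 := by
    rw [inner_self_eq_norm_sq_to_K, hψ i]; norm_num
  have hGii : G i i = (p i : ℂ) := by
    rw [hGdef i i, hinner_self, mul_one, Real.sqrt_mul_self (hp i).le]
  have hm2p : m2 = p i := by rw [hm2, hGii, Complex.ofReal_re]
  set D := ∑ j, p j * ‖(inner ℂ (ψ i) (ψ j) : ℂ)‖ ^ 2 with hD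
  have hDpos : 0 < D := by
    apply Finset.sum_pos'
    · intro j _
      exact mul_nonneg (hp j).le (by positivity)
    · exact ⟨i, Finset.mem_univ i, by rw [hinner_self]; simpa using hp i⟩
  have hm4D : m4 = p i * D := by
    have h : (G * G) i i = ∑ j, ((‖G i j‖ : ℂ)) ^ 2 := by
      rw [Matrix.mul_apply]
      refine Finset.sum_congr rfl fun j _ => ?_
      rw [← hG.1.apply j i, ← starRingEnd_apply, Complex.mul_conj,
        Complex.normSq_eq_norm_sq]
      push_cast
      ring
    rw [hm4, h, Complex.re_sum]
    simp only [← Complex.ofReal_pow, Complex.ofReal_re]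
    rw [hD, Finset.mul_sum]
    refine Finset.sum_congr rfl fun j _ => ?_
    rw [hGdef i j, norm_mul, mul_pow, Complex.norm_real, Real.norm_eq_abs,
      abs_of_nonneg (Real.sqrt_nonneg _), Real.sq_sqrt (mul_nonneg (hp i).le (hp j).le)]
    ring
  rw [div_le_iff₀ hDpos]
  have key : m2 ^ 3 ≤ m1 ^ 2 * m4 := by
    have hm2pos : 0 < m2 := by rw [hm2p]; exact hp i
    nlinarith [sq_nonneg (m1 * m3), mul_le_mul_of_nonneg_left e2 (sq_nonneg m1),
      e1, mul_le_mul e1 e1 (sq_nonneg m2) (mul_nonneg hm1n hm3n)]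
  have hfin : p i ^ 3 ≤ m1 ^ 2 * (p i * D) := by rw [← hm4D, ← hm2p]; exact key
  have hpi := hp i
  nlinarith [hfin]
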